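/- Let a1,...,a4 > 0 with 4*a2*a4 > (a1+a3)^2, z0 > 0, y0 = z0*a1/a2, and y' ∈ [0, y0). Then there exists a minimal τ1 > 0 such that the characteristic curve (z(τ), y(τ)) starting at (z0, y') satisfies z(τ1) = z0, and for this τ1 one has y(τ1) > y0. -/

import Mathlib

open Set Filter

private lemma ev_lt_left {f : ℝ → ℝ} {a d : ℝ} (hf : HasDerivAt f d a) (hd : 0 < d) :
    ∀ᶠ τ in nhdsWithin a (Set.Iio a), f τ < f a := by
  have hs : Filter.Tendsto (slope f a) (nhdsWithin a {a}ᶜ) (nhds d) :=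
    hasDerivAt_iff_tendsto_slope.mp hf
  have h1 : ∀ᶠ τ in nhdsWithin a {a}ᶜ, 0 < slope f a τ :=
    hs.eventually (eventually_gt_nhds hd)
  have hle : nhdsWithin a (Set.Iio a) ≤ nhdsWithin a {a}ᶜ :=
    nhdsWithin_mono a (fun x hx => ne_of_lt hx)
  filter_upwards [hle h1, self_mem_nhdsWithin] with τ hτ hτ'
  have hlt : τ < a := hτ'
  rw [slope_def_field] at hτ
  rcases div_pos_iff.mp hτ with ⟨h2, h3⟩ | ⟨h2, h3⟩
  · linarith
  · linarith

private lemma ev_gt_right {f : ℝ → ℝ} {a d : ℝ} (hf : HasDerivAt f d a) (hd : 0 < d) :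
    ∀ᶠ τ in nhdsWithin a (Set.Ioi a), f a < f τ := by
  have hs : Filter.Tendsto (slope f a) (nhdsWithin a {a}ᶜ) (nhds d) :=
    hasDerivAt_iff_tendsto_slope.mp hf
  have h1 : ∀ᶠ τ in nhdsWithin a {a}ᶜ, 0 < slope f a τ :=
    hs.eventually (eventually_gt_nhds hd)
  have hle : nhdsWithin a (Set.Ioi a) ≤ nhdsWithin a {a}ᶜ :=
    nhdsWithin_mono a (fun x hx => ne_of_gt hx)
  filter_upwards [hle h1, self_mem_nhdsWithin] with τ hτ hτ'
  have hlt : a < τ := hτ'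
  rw [slope_def_field] at hτ
  rcases div_pos_iff.mp hτ with ⟨h2, h3⟩ | ⟨h2, h3⟩
  · linarith
  · linarith

private lemma ev_gt_left {f : ℝ → ℝ} {a d : ℝ} (hf : HasDerivAt f d a) (hd : d < 0) :
    ∀ᶠ τ in nhdsWithin a (Set.Iio a), f a < f τ := by
  have := ev_lt_left hf.neg (by linarith : (0:ℝ) < -d)
  filter_upwards [this] with τ hτ
  simpa using hτ

set_option maxHeartbeats 2000000 in
theorem stmt3 (a1 a2 a3 a4 : ℝ) (ha1 : 0 < a1) (ha2 : 0 < a2) (ha3 : 0 < a3)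
    (ha4 : 0 < a4) (h : 4 * a2 * a4 > (a1 + a3) ^ 2)
    (z0 y0 y' : ℝ) (hz0 : 0 < z0) (hy0 : y0 = z0 * a1 / a2)
    (hy' : y' ∈ Set.Ico (0 : ℝ) y0)
    (z y : ℝ → ℝ)
    (hzode : ∀ τ : ℝ, HasDerivAt z (a1 * z τ - a2 * y τ) τ)
    (hyode : ∀ τ : ℝ, HasDerivAt y (a4 * z τ - a3 * y τ) τ)
    (hzi : z 0 = z0) (hyi : y 0 = y') :
    ∃ τ1 : ℝ, 0 < τ1 ∧ z τ1 = z0 ∧ y τ1 > y0 ∧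
      ∀ τ : ℝ, 0 < τ → z τ = z0 → τ1 ≤ τ := by
  obtain ⟨hy'0, hy'lt⟩ := hy'
  have hy0v : a2 * y0 = a1 * z0 := by rw [hy0]; field_simp
  have hcz : Continuous z := by
    rw [continuous_iff_continuousAt]
    exact fun τ => (hzode τ).differentiableAt.continuousAt
  -- initial derivative positive
  have hd0 : 0 < a1 * z 0 - a2 * y 0 := by
    rw [hzi, hyi]
    nlinarith [mul_lt_mul_of_pos_left hy'lt ha2]
  -- δ with z > z0 on (0, δ]
  have hev := ev_gt_right (hzode 0) hd0
  rw [hzi] at hev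
  obtain ⟨δ0, hδ0, hδsub⟩ := mem_nhdsGT_iff_exists_Ioo_subset.mp hev
  have hδ0pos : (0:ℝ) < δ0 := hδ0
  set δ : ℝ := δ0 / 2 with hδdef
  have hδpos : 0 < δ := by positivity
  have hzgt1 : ∀ τ, 0 < τ → τ ≤ δ → z0 < z τ := by
    intro τ h1 h2
    exact hδsub ⟨h1, by simp only [hδdef] at h2; linarith⟩
  -- the set S of return times past δ
  set S : Set ℝ := {τ | δ ≤ τ ∧ z τ = z0} with hSdef
  have hSclosed : IsClosed S := by
    have : S = Set.Ici δ ∩ z ⁻¹' {z0} := by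
      ext τ; simp [hSdef, Set.mem_setOf_eq]
    rw [this]
    exact isClosed_Ici.inter (isClosed_singleton.preimage hcz)
  have hSbdd : BddBelow S := ⟨δ, fun τ hτ => hτ.1⟩
  set ε : ℝ := (4*a2*a4 - (a1+a3)^2)/(4*a2) with hεdef
  have hεpos : 0 < ε := div_pos (by linarith) (by linarith)
  -- S is nonempty
  have hSne : S.Nonempty := by
    by_contra hne
    rw [Set.not_nonempty_iff_eq_empty] at hne
    have hno : ∀ τ, δ ≤ τ → z τ ≠ z0 := fun τ h1 h2 =>
      (Set.eq_empty_iff_forall_notMem.mp hne τ) ⟨h1, h2⟩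
    have hzge : ∀ τ, 0 ≤ τ → z0 ≤ z τ := by
      intro τ hτ
      rcases eq_or_lt_of_le hτ with h0 | h0
      · rw [← h0, hzi]
      rcases le_or_gt τ δ with h1 | h1
      · exact (hzgt1 τ h0 h1).le
      by_contra hlt
      push_neg at hlt
      have hz0mem : z0 ∈ Set.Icc (z τ) (z δ) := ⟨hlt.le, (hzgt1 δ hδpos le_rfl).le⟩
      obtain ⟨c, hc, hczc⟩ := intermediate_value_Icc' h1.le hcz.continuousOn hz0mem
      exact hno c hc.1 hczc
    have hzpos : ∀ τ, 0 ≤ τ → 0 < z τ := fun τ hτ => lt_of_lt_of_le hz0 (hzge τ hτ)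
    set u : ℝ → ℝ := fun τ => y τ / z τ with hu
    have hud : ∀ τ, 0 ≤ τ → HasDerivAt u
        (((a4 * z τ - a3 * y τ) * z τ - y τ * (a1 * z τ - a2 * y τ)) / (z τ)^2) τ :=
      fun τ hτ => (hyode τ).div (hzode τ) (hzpos τ hτ).ne'
    have hucont : ContinuousOn u (Set.Ici 0) :=
      fun τ hτ => ((hud τ hτ).continuousAt).continuousWithinAt
    have key : ∀ Z Y : ℝ, ε * Z^2 ≤ (a4*Z - a3*Y)*Z - Y*(a1*Z - a2*Y) := by
      intro Z Y
      rw [hεdef, div_mul_eq_mul_div, div_le_iff₀ (by linarith : (0:ℝ) < 4*a2)]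
      nlinarith [sq_nonneg (2*a2*Y - (a1+a3)*Z)]
    have hderivb : ∀ x ∈ interior (Set.Ici (0:ℝ)), ε ≤ deriv u x := by
      intro x hx
      rw [interior_Ici] at hx
      have hx0 : (0:ℝ) ≤ x := le_of_lt hx
      rw [(hud x hx0).deriv, le_div_iff₀ (pow_pos (hzpos x hx0) 2)]
      exact key (z x) (y x)
    have hudiff : DifferentiableOn ℝ u (interior (Set.Ici (0:ℝ))) := by
      intro x hx
      rw [interior_Ici] at hx
      exact ((hud x hx.le).differentiableAt).differentiableWithinAt
    have hmono := (convex_Ici (0:ℝ)).mul_sub_le_image_sub_of_le_deriv hucont hudiff hderivb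
    have hu0 : 0 ≤ u 0 := by
      simp only [hu]
      rw [hyi, hzi]
      exact div_nonneg hy'0 hz0.le
    set K : ℝ := 2*(a1+a3)/a2 + 1 with hKdef
    have hKpos : 0 < K := by positivity
    have hKa : a2 * K = 2*(a1+a3) + a2 := by rw [hKdef]; field_simp
    set T0 : ℝ := K / ε with hT0def
    have hT0pos : 0 < T0 := div_pos hKpos hεpos
    have huT0 : K ≤ u T0 := by
      have hm := hmono 0 Set.self_mem_Ici T0 (Set.mem_Ici.mpr hT0pos.le) hT0pos.le
      have hεT0 : ε * (T0 - 0) = K := by rw [hT0def]; field_simp; ring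
      linarith
    have huge : ∀ t, T0 ≤ t → K ≤ u t := by
      intro t ht
      have hm := hmono T0 (Set.mem_Ici.mpr hT0pos.le) t
        (Set.mem_Ici.mpr (hT0pos.le.trans ht)) ht
      nlinarith [mul_nonneg hεpos.le (sub_nonneg.mpr ht)]
    have hupos : ∀ t, T0 ≤ t → 0 < u t := fun t ht => lt_of_lt_of_le hKpos (huge t ht)
    set v : ℝ → ℝ := fun t => (u t)⁻¹ with hv
    have hvd : ∀ t, T0 ≤ t → HasDerivAt v
        (-(((a4 * z t - a3 * y t) * z t - y t * (a1 * z t - a2 * y t)) / (z t)^2) / (u t)^2) t :=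
      fun t ht => ((hud t (hT0pos.le.trans ht)).inv (hupos t ht).ne')
    have hvcont : ContinuousOn v (Set.Ici T0) :=
      fun t ht => ((hvd t ht).continuousAt).continuousWithinAt
    have hvderiv : ∀ t ∈ interior (Set.Ici T0), deriv v t ≤ -(a2/2) := by
      intro t ht
      rw [interior_Ici] at ht
      have ht' : T0 ≤ t := le_of_lt ht
      have ht0 : (0:ℝ) ≤ t := hT0pos.le.trans ht'
      rw [(hvd t ht').deriv]
      have hzt : 0 < z t := hzpos t ht0
      have hut : 0 < u t := hupos t ht'
      have hKu : K ≤ u t := huge t ht'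
      have hyt : K * z t ≤ y t := by
        have : K ≤ y t / z t := hKu
        exact (le_div_iff₀ hzt).mp this
      have hypos : 0 < y t := lt_of_lt_of_le (mul_pos hKpos hzt) hyt
      have h2 : (a1+a3) * z t ≤ (a2/2) * (y t) := by nlinarith
      have hN : (a2/2) * (u t)^2 ≤
          ((a4 * z t - a3 * y t) * z t - y t * (a1 * z t - a2 * y t)) / (z t)^2 := by
        have hu2 : (u t)^2 = (y t)^2 / (z t)^2 := by
          simp only [hu]; rw [div_pow]
        have hN0 : (a2/2) * (y t)^2 ≤
            (a4 * z t - a3 * y t) * z t - y t * (a1 * z t - a2 * y t) := by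
          nlinarith [mul_nonneg hypos.le (sub_nonneg.mpr h2), mul_pos ha4 (mul_pos hzt hzt)]
        rw [hu2, ← mul_div_assoc]
        exact (div_le_div_iff_of_pos_right (pow_pos hzt 2)).mpr hN0
      have hu2pos : 0 < (u t)^2 := by positivity
      have h3 : a2/2 ≤
          (((a4 * z t - a3 * y t) * z t - y t * (a1 * z t - a2 * y t)) / (z t)^2) / (u t)^2 := by
        rw [le_div_iff₀ hu2pos]; linarith
      rw [neg_div]; linarith
    have hvdiff : DifferentiableOn ℝ v (interior (Set.Ici T0)) := by
      intro x hx
      rw [interior_Ici] at hx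
      exact ((hvd x hx.le).differentiableAt).differentiableWithinAt
    have hmono2 := (convex_Ici T0).image_sub_le_mul_sub_of_deriv_le hvcont hvdiff hvderiv
    have hvT0pos : 0 < v T0 := inv_pos.mpr (hupos T0 le_rfl)
    set t1 : ℝ := T0 + (2/a2) * (v T0 + 1) with ht1def
    have ht1ge : T0 ≤ t1 := by
      have : 0 < (2/a2) * (v T0 + 1) := by positivity
      rw [ht1def]; linarith
    have hm2 := hmono2 T0 Set.self_mem_Ici t1 (Set.mem_Ici.mpr ht1ge) ht1ge
    have hcalc : -(a2/2) * (t1 - T0) = -(v T0 + 1) := by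
      rw [ht1def]; field_simp; ring
    have hvt1pos : 0 < v t1 := inv_pos.mpr (hupos t1 ht1ge)
    linarith
  -- take τ1 = sInf S
  set τ1 : ℝ := sInf S with hτ1def
  have hτ1mem : τ1 ∈ S := hSclosed.csInf_mem hSne hSbdd
  have hτ1pos : 0 < τ1 := lt_of_lt_of_le hδpos hτ1mem.1
  have hzτ1 : z τ1 = z0 := hτ1mem.2
  have hmin : ∀ τ, 0 < τ → z τ = z0 → τ1 ≤ τ := by
    intro τ hτ hzτ
    have hτδ : δ ≤ τ := by
      by_contra hc
      push_neg at hc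
      exact (hzgt1 τ hτ hc.le).ne' hzτ
    exact csInf_le hSbdd ⟨hτδ, hzτ⟩
  have hzmid : ∀ τ, 0 < τ → τ < τ1 → z0 < z τ := by
    intro τ h1 h2
    rcases le_or_gt τ δ with h3 | h3
    · exact hzgt1 τ h1 h3
    by_contra hc
    push_neg at hc
    rcases eq_or_lt_of_le hc with he | hl
    · exact absurd h2 (not_lt.mpr (hmin τ h1 he))
    · obtain ⟨c, hcmem, hcz⟩ := intermediate_value_Icc' h3.le hcz.continuousOn
        ⟨hl.le, (hzgt1 δ hδpos le_rfl).le⟩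
      have : τ1 ≤ c := hmin c (lt_of_lt_of_le hδpos hcmem.1) hcz
      linarith [hcmem.2]
  have hyτ1 : y0 < y τ1 := by
    by_contra hc
    push_neg at hc
    rcases eq_or_lt_of_le hc with he | hl
    · -- y τ1 = y0 : second derivative argument
      set w : ℝ → ℝ := fun τ => a1 * z τ - a2 * y τ with hwdef
      have hwτ1 : w τ1 = 0 := by
        simp only [hwdef]
        rw [hzτ1, he]
        linarith
      have hwd : HasDerivAt w
          (a1 * (a1 * z τ1 - a2 * y τ1) - a2 * (a4 * z τ1 - a3 * y τ1)) τ1 :=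
        ((hzode τ1).const_mul a1).sub ((hyode τ1).const_mul a2)
      have hdneg : a1 * (a1 * z τ1 - a2 * y τ1) - a2 * (a4 * z τ1 - a3 * y τ1) < 0 := by
        rw [hzτ1, he]
        have haa : 0 < a2*a4 - a1*a3 := by nlinarith [sq_nonneg (a1 - a3)]
        nlinarith [mul_pos hz0 haa]
      have hev2 : ∀ᶠ τ in nhdsWithin τ1 (Set.Iio τ1), 0 < w τ := by
        have := ev_gt_left hwd hdneg
        filter_upwards [this] with τ hτ
        rw [hwτ1] at hτ; exact hτ
      obtain ⟨b, hb, hbsub⟩ := mem_nhdsLT_iff_exists_Ioo_subset.mp hev2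
      set b' : ℝ := max b 0 with hb'def
      have hb'lt : b' < τ1 := max_lt hb hτ1pos
      have hsm : StrictMonoOn z (Set.Icc b' τ1) := by
        apply strictMonoOn_of_deriv_pos (convex_Icc b' τ1) hcz.continuousOn
        intro x hx
        rw [interior_Icc] at hx
        rw [(hzode x).deriv]
        exact hbsub ⟨lt_of_le_of_lt (le_max_left b 0) hx.1, hx.2⟩
      set m : ℝ := (b' + τ1)/2 with hmdef
      have hmmem : b' < m ∧ m < τ1 := by constructor <;> (rw [hmdef]; linarith)
      have hmlt : z m < z τ1 :=
        hsm ⟨hmmem.1.le, hmmem.2.le⟩ ⟨le_refl b' |>.trans hb'lt.le, le_refl τ1⟩ hmmem.2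
      have hmgt : z0 < z m :=
        hzmid m (lt_of_le_of_lt (le_max_right b 0) hmmem.1) hmmem.2
      rw [hzτ1] at hmlt
      linarith
    · -- y τ1 < y0 : first derivative positive, contradiction on the left
      have hdpos : 0 < a1 * z τ1 - a2 * y τ1 := by
        rw [hzτ1]
        nlinarith [mul_lt_mul_of_pos_left hl ha2]
      have hev2 := ev_lt_left (hzode τ1) hdpos
      have hmem : Set.Ioo 0 τ1 ∈ nhdsWithin τ1 (Set.Iio τ1) :=
        Ioo_mem_nhdsLT_of_mem ⟨hτ1pos, le_refl τ1⟩
      obtain ⟨τ, hτlt, hτmem⟩ := (hev2.and (eventually_of_mem hmem (fun x hx => hx))).exists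
      have := hzmid τ hτmem.1 hτmem.2
      rw [hzτ1] at hτlt
      linarith
  exact ⟨τ1, hτ1pos, hzτ1, hyτ1, hmin⟩
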